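/- Let S be a conical preordered abelian monoid. An element x ∈ S is paradoxical if and only if there exists an integer n ≥ 1 such that n·x is properly infinite. -/
import Mathlib


/-- In a conical preordered abelian monoid, an element `x` is paradoxical if and only if
`n • x` is properly infinite for some `n ≥ 1`. -/
theorem stmt3 {S : Type*} [AddCommMonoid S] [Preorder S]
    (hzero : ∀ x : S, 0 ≤ x)
    (hadd : ∀ x y z : S, x ≤ y → x + z ≤ y + z)
    (hconical : ∀ x : S, x ≤ 0 → x = 0)
    (x : S) :
    (x ≠ 0 ∧ ∃ n : ℕ, 1 ≤ n ∧ (n + 1) • x ≤ n • x) ↔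
      (∃ n : ℕ, 1 ≤ n ∧ n • x ≠ 0 ∧ n • x + n • x ≤ n • x) := by
  have mono : ∀ k m : ℕ, k ≤ m → k • x ≤ m • x := by
    intro k m hkm
    have := hadd 0 ((m - k) • x) (k • x) (hzero _)
    simpa [← add_nsmul, Nat.sub_add_cancel hkm] using this
  constructor
  · rintro ⟨hx, n, hn, hle⟩
    have key : ∀ k : ℕ, (n + k) • x ≤ n • x := by
      intro k
      induction k with
      | zero => simp
      | succ k ih =>
        calc (n + (k + 1)) • x = (n + 1) • x + k • x := by
              rw [← add_nsmul]; ring_nf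
          _ ≤ n • x + k • x := hadd _ _ _ hle
          _ = (n + k) • x := (add_nsmul x n k).symm
          _ ≤ n • x := ih
    refine ⟨n, hn, ?_, ?_⟩
    · intro h0
      apply hx
      have h1 : (n + 1) • x ≤ 0 := h0 ▸ hle
      have h2 := hconical _ h1
      rw [succ_nsmul, h0, zero_add] at h2
      exact h2
    · calc n • x + n • x = (n + n) • x := (add_nsmul x n n).symm
        _ ≤ n • x := key n
  · rintro ⟨n, hn, hne, hle⟩
    refine ⟨?_, n, hn, ?_⟩
    · intro h; exact hne (by rw [h]; simp)
    · calc (n + 1) • x ≤ (n + n) • x := mono _ _ (by omega)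
        _ = n • x + n • x := add_nsmul x n n
        _ ≤ n • x := hle
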